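/- arXiv:1406.7435 — 4 statements merged into one kernel-verified Lean document; each statement's English description precedes it below -/
import Mathlib

section
/- For any fixed permutation π ∈ Sₙ, if σ is chosen uniformly at random from Sₙ, then the expected inversion-ℓ₁ distance satisfies E[d_{x,ℓ₁}(π,σ)] > n(n−1)/8, and its variance satisfies Var[d_{x,ℓ₁}(π,σ)] < (n+1)(n+2)(2n+3)/6. -/
open Finset

/-- Kendall tau distance: number of discordant pairs. -/
def dtau {n : ℕ} (σ₁ σ₂ : Equiv.Perm (Fin n)) : ℕ :=
  (Finset.univ.filter (fun p : Fin n × Fin n =>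
    p.1 < p.2 ∧ ¬((σ₁ p.1 < σ₁ p.2) ↔ (σ₂ p.1 < σ₂ p.2)))).card

/-- Spearman's footrule (ℓ₁ distance of permutation vectors). -/
def dl1 {n : ℕ} (σ₁ σ₂ : Equiv.Perm (Fin n)) : ℕ :=
  ∑ i : Fin n, ((σ₁ i : ℤ) - (σ₂ i : ℤ)).natAbs

/-- Chebyshev (ℓ∞) distance of permutation vectors. -/
def dlinf {n : ℕ} (σ₁ σ₂ : Equiv.Perm (Fin n)) : ℕ :=
  Finset.univ.sup (fun i : Fin n => ((σ₁ i : ℤ) - (σ₂ i : ℤ)).natAbs)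

/-- Inversion vector: `invVec σ i` counts `j < i` with `σ⁻¹ j > σ⁻¹ i`
(elements as `Fin n`; coordinate 0 is always 0). -/
def invVec {n : ℕ} (σ : Equiv.Perm (Fin n)) (i : Fin n) : ℕ :=
  (Finset.univ.filter (fun j : Fin n => j < i ∧ σ⁻¹ i < σ⁻¹ j)).card

/-- Inversion-ℓ₁ distance: ℓ₁ distance between inversion vectors. -/
def dinv {n : ℕ} (σ₁ σ₂ : Equiv.Perm (Fin n)) : ℕ :=
  ∑ i : Fin n, ((invVec σ₁ i : ℤ) - (invVec σ₂ i : ℤ)).natAbs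

/-- Number of inversions of a permutation. -/
def inversions {n : ℕ} (σ : Equiv.Perm (Fin n)) : ℕ :=
  (Finset.univ.filter (fun p : Fin n × Fin n => p.1 < p.2 ∧ σ p.2 < σ p.1)).card

/-- Number of permutations of `Sₙ` with exactly `k` inversions. -/
def Kn (n k : ℕ) : ℕ :=
  (Finset.univ.filter (fun σ : Equiv.Perm (Fin n) => inversions σ = k)).card

section Aux
open Finset

private lemma flip_iff {n : ℕ} {x y u v : Fin n} (hxy : x ≠ y) (huv : u ≠ v)
    (h : x < y ↔ u < v) : y < x ↔ v < u := by
  constructor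
  · intro hy
    rcases lt_or_gt_of_ne huv with h' | h'
    · exact absurd (h.mpr h') (lt_asymm hy)
    · exact h'
  · intro hv
    rcases lt_or_gt_of_ne hxy with h' | h'
    · exact absurd (h.mp h') (lt_asymm hv)
    · exact h'

lemma code_inj {n : ℕ} (p q : Equiv.Perm (Fin n))
    (h : ∀ i : Fin n, (univ.filter (fun j : Fin n => j < i ∧ p i < p j)).card
        = (univ.filter (fun j : Fin n => j < i ∧ q i < q j)).card) : p = q := by
  have main : ∀ m : ℕ, ∀ i : Fin n, i.val = m → ∀ j : Fin n, j < i →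
      (p i < p j ↔ q i < q j) := by
    intro m
    induction m using Nat.strong_induction_on with
    | _ m IH =>
      intro i him j hji
      have rel : ∀ j k : Fin n, j < i → k < i → (p j < p k ↔ q j < q k) := by
        intro j k hj hk
        rcases lt_trichotomy j k with hlt | heq | hgt
        · have hiff := IH k.val (him ▸ hk) k rfl j hlt
          exact flip_iff (fun e => absurd (p.injective e) (ne_of_gt hlt))
            (fun e => absurd (q.injective e) (ne_of_gt hlt)) hiff
        · subst heq; simp [lt_irrefl]
        · exact IH j.val (him ▸ hj) j rfl k hgt
      have hij : j ≠ i := ne_of_lt hji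
      have hRpq : (univ.filter (fun k : Fin n => k < i ∧ p j < p k))
          = (univ.filter (fun k : Fin n => k < i ∧ q j < q k)) := by
        ext k
        simp only [mem_filter, mem_univ, true_and]
        exact and_congr_right (fun hk => rel j k hji hk)
      have rank : ∀ r : Equiv.Perm (Fin n),
          (r i < r j ↔ (univ.filter (fun k : Fin n => k < i ∧ r j < r k)).card
            < (univ.filter (fun k : Fin n => k < i ∧ r i < r k)).card) := by
        intro r
        constructor
        · intro hlt
          apply card_lt_card
          have hsub : (univ.filter (fun k : Fin n => k < i ∧ r j < r k))
              ⊆ (univ.filter (fun k : Fin n => k < i ∧ r i < r k)) := by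
            intro k hk
            simp only [mem_filter, mem_univ, true_and] at hk ⊢
            exact ⟨hk.1, lt_trans hlt hk.2⟩
          rw [Finset.ssubset_iff_of_subset hsub]
          exact ⟨j, by simp [hji, hlt], by simp [lt_irrefl]⟩
        · intro hcard
          by_contra hnot
          have hrij : r j ≠ r i := fun e => hij (r.injective e)
          have hlt : r j < r i := by
            rcases lt_or_gt_of_ne hrij with h' | h'
            · exact h'
            · exact absurd h' hnot
          have hsub : (univ.filter (fun k : Fin n => k < i ∧ r i < r k))
              ⊆ (univ.filter (fun k : Fin n => k < i ∧ r j < r k)) := by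
            intro k hk
            simp only [mem_filter, mem_univ, true_and] at hk ⊢
            exact ⟨hk.1, lt_trans hlt hk.2⟩
          exact absurd (card_le_card hsub) (by omega)
      rw [rank p, rank q, hRpq, h i]
  have total : ∀ j k : Fin n, p j < p k ↔ q j < q k := by
    intro j k
    rcases lt_trichotomy j k with hlt | heq | hgt
    · have hiff := main k.val k rfl j hlt
      exact flip_iff (fun e => absurd (p.injective e) (ne_of_gt hlt))
        (fun e => absurd (q.injective e) (ne_of_gt hlt)) hiff
    · subst heq; simp [lt_irrefl]
    · exact main j.val j rfl k hgt
  ext i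
  have count : ∀ r : Equiv.Perm (Fin n),
      (univ.filter (fun k : Fin n => r k < r i)).card = (r i).val := by
    intro r
    have e1 : (univ.filter (fun k : Fin n => r k < r i)).card
        = (univ.filter (fun v : Fin n => v < r i)).card := by
      apply Finset.card_nbij' r r.symm
      · intro a ha; simp only [mem_coe, mem_filter, mem_univ, true_and] at ha ⊢; exact ha
      · intro a ha; simp only [mem_coe, mem_filter, mem_univ, true_and] at ha ⊢
        simpa using ha
      · intro a _; simp
      · intro a _; simp
    rw [e1]
    have : (univ.filter (fun v : Fin n => v < r i)) = Finset.Iio (r i) := by ext v; simp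
    rw [this, Fin.card_Iio]
  have heq : (univ.filter (fun k : Fin n => p k < p i))
      = (univ.filter (fun k : Fin n => q k < q i)) := by
    ext k; simp only [mem_filter, mem_univ, true_and]; exact total k i
  have : (p i).val = (q i).val := by rw [← count p, heq, count q]
  exact this

lemma invVec_le {n : ℕ} (σ : Equiv.Perm (Fin n)) (i : Fin n) : invVec σ i ≤ i.val := by
  have hsub : (univ.filter (fun j : Fin n => j < i ∧ σ⁻¹ i < σ⁻¹ j)) ⊆ Finset.Iio i := by
    intro j hj
    simp only [mem_filter, mem_univ, true_and] at hj
    simpa using hj.1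
  calc invVec σ i ≤ (Finset.Iio i).card := card_le_card hsub
    _ = i.val := Fin.card_Iio i

/-- The Lehmer-type code of a permutation as an element of a product of `Fin`s. -/
def code {n : ℕ} (σ : Equiv.Perm (Fin n)) : ∀ i : Fin n, Fin (i.val + 1) :=
  fun i => ⟨invVec σ i, Nat.lt_succ_of_le (invVec_le σ i)⟩

lemma code_bijective {n : ℕ} : Function.Bijective (code (n := n)) := by
  rw [Fintype.bijective_iff_injective_and_card]
  constructor
  · intro σ τ hst
    have hvec : ∀ i, invVec σ i = invVec τ i :=
      fun i => congrArg Fin.val (congrFun hst i)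
    exact inv_injective (code_inj σ⁻¹ τ⁻¹ (fun i => hvec i))
  · rw [Fintype.card_perm, Fintype.card_fin, Fintype.card_pi]
    simp only [Fintype.card_fin]
    rw [Fin.prod_univ_eq_prod_range (fun i => i + 1) n,
      Finset.prod_range_add_one_eq_factorial]

lemma sum_code {n : ℕ} (F : (∀ k : Fin n, Fin (k.val+1)) → ℚ) :
    ∑ σ : Equiv.Perm (Fin n), F (code σ) = ∑ x : (∀ k : Fin n, Fin (k.val+1)), F x :=
  Equiv.sum_comp (Equiv.ofBijective code code_bijective) F

lemma pi_sum_prod {n : ℕ} (f : ∀ k : Fin n, Fin (k.val+1) → ℚ) :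
    ∑ x : (∀ k : Fin n, Fin (k.val+1)), ∏ k : Fin n, f k (x k)
      = ∏ k : Fin n, ∑ y : Fin (k.val+1), f k y := by
  rw [← Fintype.piFinset_univ]
  exact (Finset.prod_univ_sum (fun k : Fin n => (univ : Finset (Fin (k.val+1)))) f).symm

lemma marg_one {n : ℕ} (i : Fin n) (g : Fin (i.val+1) → ℚ) :
    ∑ x : (∀ k : Fin n, Fin (k.val+1)), g (x i)
      = (∏ k ∈ univ.erase i, ((k.val+1 : ℕ) : ℚ)) * ∑ y : Fin (i.val+1), g y := by
  classical
  set f : ∀ k : Fin n, Fin (k.val+1) → ℚ :=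
    Function.update (fun k (_ : Fin (k.val+1)) => (1:ℚ)) i g with hf
  have hfi : f i = g := by rw [hf]; exact Function.update_self _ _ _
  have hfk : ∀ k, k ≠ i → f k = fun _ => (1:ℚ) := fun k hk => Function.update_of_ne hk _ _
  have hx : ∀ x : (∀ k : Fin n, Fin (k.val+1)), (∏ k : Fin n, f k (x k)) = g (x i) := by
    intro x
    rw [Finset.prod_eq_single i]
    · rw [hfi]
    · intro k _ hk; rw [hfk k hk]
    · intro h; exact absurd (mem_univ i) h
  calc ∑ x : (∀ k : Fin n, Fin (k.val+1)), g (x i)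
      = ∑ x : (∀ k : Fin n, Fin (k.val+1)), ∏ k : Fin n, f k (x k) := by
        exact (Finset.sum_congr rfl (fun x _ => hx x)).symm
    _ = ∏ k : Fin n, ∑ y : Fin (k.val+1), f k y := pi_sum_prod f
    _ = (∑ y : Fin (i.val+1), f i y) * ∏ k ∈ univ.erase i, ∑ y : Fin (k.val+1), f k y :=
        (Finset.mul_prod_erase univ _ (mem_univ i)).symm
    _ = (∏ k ∈ univ.erase i, ((k.val+1 : ℕ) : ℚ)) * ∑ y : Fin (i.val+1), g y := by
        rw [hfi, mul_comm]
        congr 1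
        apply Finset.prod_congr rfl
        intro k hk
        rw [hfk k (mem_erase.mp hk).1]
        simp

lemma marg_two {n : ℕ} {i j : Fin n} (hij : i ≠ j)
    (gi : Fin (i.val+1) → ℚ) (gj : Fin (j.val+1) → ℚ)
    (hgi : ∑ y : Fin (i.val+1), gi y = 0) :
    ∑ x : (∀ k : Fin n, Fin (k.val+1)), gi (x i) * gj (x j) = 0 := by
  classical
  set f : ∀ k : Fin n, Fin (k.val+1) → ℚ :=
    Function.update (Function.update (fun k (_ : Fin (k.val+1)) => (1:ℚ)) i gi) j gj with hf
  have hfj : f j = gj := by rw [hf]; exact Function.update_self _ _ _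
  have hfi : f i = gi := by
    rw [hf, Function.update_of_ne hij, Function.update_self]
  have hfk : ∀ k, k ≠ i → k ≠ j → f k = fun _ => (1:ℚ) := by
    intro k hki hkj
    rw [hf, Function.update_of_ne hkj, Function.update_of_ne hki]
  have hx : ∀ x : (∀ k : Fin n, Fin (k.val+1)),
      (∏ k : Fin n, f k (x k)) = gi (x i) * gj (x j) := by
    intro x
    have hjmem : j ∈ univ.erase i := mem_erase.mpr ⟨Ne.symm hij, mem_univ j⟩
    rw [← Finset.mul_prod_erase univ _ (mem_univ i),
        ← Finset.mul_prod_erase _ _ hjmem, hfi, hfj]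
    have h1 : ∏ k ∈ (univ.erase i).erase j, f k (x k) = 1 := by
      apply Finset.prod_eq_one
      intro k hk
      rw [hfk k (mem_erase.mp (mem_erase.mp hk).2).1 (mem_erase.mp hk).1]
    rw [h1]; ring
  rw [(Finset.sum_congr rfl (fun x _ => (hx x).symm) :
        ∑ x : (∀ k : Fin n, Fin (k.val+1)), gi (x i) * gj (x j)
          = ∑ x : (∀ k : Fin n, Fin (k.val+1)), ∏ k : Fin n, f k (x k)),
      pi_sum_prod f]
  apply Finset.prod_eq_zero (mem_univ i)
  rw [hfi]; exact hgi

lemma gauss_q : ∀ t : ℕ, ∑ y ∈ Finset.range t, (y:ℚ) = t*(t-1)/2 := by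
  intro t; induction t with
  | zero => simp
  | succ t ih => rw [Finset.sum_range_succ, ih]; push_cast; ring

lemma sq_sum_q : ∀ t : ℕ, ∑ y ∈ Finset.range t, ((y:ℚ))^2 = t*(t-1)*(2*t-1)/6 := by
  intro t; induction t with
  | zero => simp
  | succ t ih => rw [Finset.sum_range_succ, ih]; push_cast; ring

lemma sum_abs_range : ∀ (m a : ℕ), a ≤ m →
    ∑ y ∈ Finset.range (m+1), |(a:ℚ) - y|
      = ((a:ℚ)*((a:ℚ)+1) + ((m:ℚ)-(a:ℚ))*((m:ℚ)-(a:ℚ)+1))/2 := by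
  intro m
  induction m with
  | zero =>
    intro a ha
    interval_cases a
    simp
  | succ m ih =>
    intro a ha
    rcases Nat.lt_or_ge a (m+1) with h | h
    · have ham : a ≤ m := by omega
      have hcast : (a:ℚ) ≤ (m:ℚ) := by exact_mod_cast ham
      rw [Finset.sum_range_succ, ih a ham]
      have habs : |(a:ℚ) - ((m+1:ℕ):ℚ)| = ((m:ℚ)+1) - a := by
        rw [abs_of_nonpos (by push_cast; linarith)]
        push_cast; ring
      rw [habs]; push_cast; ring
    · have ha' : a = m+1 := by omega
      subst ha'
      have hterm : ∀ y ∈ Finset.range (m+2), |((m+1:ℕ):ℚ) - y| = ((m+1:ℕ):ℚ) - y := by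
        intro y hy
        have h1 : y ≤ m+1 := by simp at hy; omega
        have h2 : (y:ℚ) ≤ (m:ℚ)+1 := by exact_mod_cast h1
        rw [abs_of_nonneg (by push_cast; linarith)]
      rw [Finset.sum_congr rfl hterm, Finset.sum_sub_distrib, Finset.sum_const,
        Finset.card_range, gauss_q]
      push_cast; ring

lemma centered_le {α : Type*} [Fintype α] (t : α → ℚ) (c : ℚ) (hc : 0 < c)
    (hcard : (Fintype.card α : ℚ) = c) :
    ∑ y : α, (t y - (∑ y : α, t y)/c)^2 ≤ ∑ y : α, (t y)^2 := by
  set S := ∑ y : α, t y with hS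
  have e : ∀ y : α, (t y - S/c)^2 = (t y)^2 - (2*(S/c))*t y + (S/c)^2 := fun y => by ring
  rw [Finset.sum_congr rfl (fun y _ => e y), Finset.sum_add_distrib,
    Finset.sum_sub_distrib, ← Finset.mul_sum, Finset.sum_const, Finset.card_univ,
    nsmul_eq_mul, hcard, ← hS]
  have h1 : 2*(S/c)*S - c*(S/c)^2 = S^2/c := by field_simp; ring
  have h2 : (0:ℚ) ≤ S^2/c := div_nonneg (sq_nonneg S) hc.le
  linarith

end Aux
section Main
open Finset

variable {n : ℕ}

/-- per-coordinate distance function -/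
def gq (π : Equiv.Perm (Fin n)) (i : Fin n) (y : Fin (i.val+1)) : ℚ :=
  |((invVec π i : ℚ)) - (y.val : ℚ)|

def Sq (π : Equiv.Perm (Fin n)) (i : Fin n) : ℚ := ∑ y : Fin (i.val+1), gq π i y

def cq (i : Fin n) : ℚ := ((i.val + 1 : ℕ) : ℚ)

def Pq (i : Fin n) : ℚ := ∏ k ∈ Finset.univ.erase i, ((k.val+1 : ℕ) : ℚ)

lemma cq_pos (i : Fin n) : (0:ℚ) < cq i := by
  unfold cq; exact_mod_cast Nat.succ_pos i.val

lemma Pq_pos (i : Fin n) : (0:ℚ) < Pq i := by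
  unfold Pq
  apply Finset.prod_pos
  intro k _
  exact_mod_cast Nat.succ_pos k.val

lemma cq_mul_Pq (i : Fin n) : cq i * Pq i = (Nat.factorial n : ℚ) := by
  unfold cq Pq
  rw [Finset.mul_prod_erase univ (fun k : Fin n => ((k.val+1 : ℕ) : ℚ)) (mem_univ i)]
  rw [← Nat.cast_prod]
  congr 1
  rw [Fin.prod_univ_eq_prod_range (fun k => k + 1) n]
  exact Finset.prod_range_add_one_eq_factorial n

lemma dinv_eq_sum (π σ : Equiv.Perm (Fin n)) :
    (dinv π σ : ℚ) = ∑ i : Fin n, gq π i (code σ i) := by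
  unfold dinv gq code
  push_cast [Nat.cast_natAbs]
  rfl

lemma tot_sum (π : Equiv.Perm (Fin n)) :
    ∑ σ : Equiv.Perm (Fin n), (dinv π σ : ℚ) = ∑ i : Fin n, Pq i * Sq π i := by
  rw [Finset.sum_congr rfl (fun σ _ => dinv_eq_sum π σ)]
  rw [sum_code (fun x => ∑ i : Fin n, gq π i (x i))]
  rw [Finset.sum_comm]
  exact Finset.sum_congr rfl (fun i _ => marg_one i (gq π i))

lemma mean_div (π : Equiv.Perm (Fin n)) :
    (∑ σ : Equiv.Perm (Fin n), (dinv π σ : ℚ)) / (Nat.factorial n : ℚ)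
      = ∑ i : Fin n, Sq π i / cq i := by
  rw [tot_sum π, Finset.sum_div]
  apply Finset.sum_congr rfl
  intro i _
  rw [← cq_mul_Pq i, mul_comm (cq i) (Pq i)]
  exact mul_div_mul_left (Sq π i) (cq i) (ne_of_gt (Pq_pos i))

lemma Sq_formula (π : Equiv.Perm (Fin n)) (i : Fin n) :
    Sq π i = (((invVec π i : ℚ))*((invVec π i : ℚ)+1)
      + ((i.val:ℚ)-(invVec π i : ℚ))*((i.val:ℚ)-(invVec π i : ℚ)+1))/2 := by
  unfold Sq gq
  rw [Fin.sum_univ_eq_sum_range (fun t => |((invVec π i : ℚ)) - (t:ℚ)|) (i.val+1)]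
  exact sum_abs_range i.val (invVec π i) (invVec_le π i)

lemma term_ge (π : Equiv.Perm (Fin n)) (i : Fin n) :
    (i.val:ℚ)/4 ≤ Sq π i / cq i := by
  rw [le_div_iff₀ (cq_pos i), Sq_formula π i]
  have h0 : (0:ℚ) ≤ (invVec π i : ℚ) := Nat.cast_nonneg _
  have h1 : (invVec π i : ℚ) ≤ (i.val : ℚ) := by exact_mod_cast invVec_le π i
  have hc : cq i = (i.val:ℚ) + 1 := by unfold cq; push_cast; ring
  rw [hc]
  nlinarith [sq_nonneg (2*(invVec π i : ℚ) - (i.val:ℚ))]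

lemma term_gt (π : Equiv.Perm (Fin n)) (i : Fin n) (hi : 1 ≤ i.val) :
    (i.val:ℚ)/4 < Sq π i / cq i := by
  rw [lt_div_iff₀ (cq_pos i), Sq_formula π i]
  have h0 : (0:ℚ) ≤ (invVec π i : ℚ) := Nat.cast_nonneg _
  have h1 : (invVec π i : ℚ) ≤ (i.val : ℚ) := by exact_mod_cast invVec_le π i
  have h2 : (1:ℚ) ≤ (i.val : ℚ) := by exact_mod_cast hi
  have hc : cq i = (i.val:ℚ) + 1 := by unfold cq; push_cast; ring
  rw [hc]
  nlinarith [sq_nonneg (2*(invVec π i : ℚ) - (i.val:ℚ))]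

lemma center_zero (π : Equiv.Perm (Fin n)) (i : Fin n) :
    ∑ y : Fin (i.val+1), (gq π i y - Sq π i / cq i) = 0 := by
  rw [Finset.sum_sub_distrib, Finset.sum_const, Finset.card_univ, Fintype.card_fin,
    nsmul_eq_mul]
  have hc : ((i.val+1 : ℕ):ℚ) = cq i := rfl
  have hS : ∑ y : Fin (i.val+1), gq π i y = Sq π i := rfl
  push_cast [hc, hS]
  rw [mul_div_cancel₀ (Sq π i) (ne_of_gt (cq_pos i))]
  ring

lemma var_sum (π : Equiv.Perm (Fin n))
    (M : ℚ) (hM : M = ∑ i : Fin n, Sq π i / cq i) :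
    ∑ σ : Equiv.Perm (Fin n), ((dinv π σ : ℚ) - M)^2
      = ∑ i : Fin n, Pq i * (∑ y : Fin (i.val+1), (gq π i y - Sq π i / cq i)^2) := by
  have h1 : ∀ σ : Equiv.Perm (Fin n),
      ((dinv π σ:ℚ) - M) = ∑ i : Fin n, (gq π i (code σ i) - Sq π i / cq i) := by
    intro σ
    rw [dinv_eq_sum π σ, hM, Finset.sum_sub_distrib]
  calc ∑ σ : Equiv.Perm (Fin n), ((dinv π σ : ℚ) - M)^2
      = ∑ σ : Equiv.Perm (Fin n),
          (∑ i : Fin n, (gq π i (code σ i) - Sq π i / cq i))^2 :=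
        Finset.sum_congr rfl (fun σ _ => by rw [h1 σ])
    _ = ∑ x : (∀ k : Fin n, Fin (k.val+1)),
          (∑ i : Fin n, (gq π i (x i) - Sq π i / cq i))^2 :=
        sum_code (fun x => (∑ i : Fin n, (gq π i (x i) - Sq π i / cq i))^2)
    _ = ∑ x : (∀ k : Fin n, Fin (k.val+1)), ∑ i : Fin n, ∑ j : Fin n,
          (gq π i (x i) - Sq π i / cq i) * (gq π j (x j) - Sq π j / cq j) := by
        apply Finset.sum_congr rfl
        intro x _
        rw [sq, Finset.sum_mul_sum]
    _ = ∑ i : Fin n, ∑ x : (∀ k : Fin n, Fin (k.val+1)), ∑ j : Fin n,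
          (gq π i (x i) - Sq π i / cq i) * (gq π j (x j) - Sq π j / cq j) :=
        Finset.sum_comm
    _ = ∑ i : Fin n, ∑ j : Fin n, ∑ x : (∀ k : Fin n, Fin (k.val+1)),
          (gq π i (x i) - Sq π i / cq i) * (gq π j (x j) - Sq π j / cq j) :=
        Finset.sum_congr rfl (fun i _ => Finset.sum_comm)
    _ = ∑ i : Fin n, Pq i * (∑ y : Fin (i.val+1), (gq π i y - Sq π i / cq i)^2) := by
        apply Finset.sum_congr rfl
        intro i _
        rw [Finset.sum_eq_single i]
        · rw [marg_one i (fun y => (gq π i y - Sq π i / cq i) * (gq π i y - Sq π i / cq i))]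
          congr 1
          apply Finset.sum_congr rfl
          intro y _
          rw [sq]
        · intro j _ hji
          exact marg_two (Ne.symm hji) (fun y => gq π i y - Sq π i / cq i)
            (fun y => gq π j y - Sq π j / cq j) (center_zero π i)
        · intro hmem
          exact absurd (mem_univ i) hmem

lemma Q_bound (π : Equiv.Perm (Fin n)) (i : Fin n) :
    (∑ y : Fin (i.val+1), (gq π i y - Sq π i / cq i)^2) / cq i ≤ ((i.val:ℚ))^2 := by
  rw [div_le_iff₀ (cq_pos i)]
  have hcard : ((Fintype.card (Fin (i.val+1)) : ℕ) : ℚ) = cq i := by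
    rw [Fintype.card_fin]; rfl
  have h1 : ∑ y : Fin (i.val+1), (gq π i y - Sq π i / cq i)^2
      ≤ ∑ y : Fin (i.val+1), (gq π i y)^2 := by
    have h := centered_le (gq π i) (cq i) (cq_pos i) hcard
    have hS : (∑ y : Fin (i.val+1), gq π i y) = Sq π i := rfl
    rwa [hS] at h
  have hterm : ∀ y : Fin (i.val+1), (gq π i y)^2 ≤ ((i.val:ℚ))^2 := by
    intro y
    have h0 : (0:ℚ) ≤ (invVec π i : ℚ) := Nat.cast_nonneg _
    have ha : (invVec π i : ℚ) ≤ (i.val : ℚ) := by exact_mod_cast invVec_le π i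
    have hy0 : (0:ℚ) ≤ (y.val : ℚ) := Nat.cast_nonneg _
    have hy : (y.val : ℚ) ≤ (i.val : ℚ) := by
      have := Nat.lt_succ_iff.mp y.isLt
      exact_mod_cast this
    have habs : gq π i y ≤ (i.val:ℚ) := by
      unfold gq
      exact abs_le.mpr ⟨by linarith, by linarith⟩
    have hnn : (0:ℚ) ≤ gq π i y := abs_nonneg _
    exact pow_le_pow_left₀ hnn habs 2
  have h2 : ∑ y : Fin (i.val+1), (gq π i y)^2 ≤ ((i.val:ℚ))^2 * cq i := by
    calc ∑ y : Fin (i.val+1), (gq π i y)^2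
        ≤ ∑ _y : Fin (i.val+1), ((i.val:ℚ))^2 :=
          Finset.sum_le_sum (fun y _ => hterm y)
      _ = ((i.val:ℚ))^2 * cq i := by
          rw [Finset.sum_const, Finset.card_univ, nsmul_eq_mul, hcard, mul_comm]
  linarith

end Main

/-- Mean and variance bounds for the inversion-ℓ₁ distance from a fixed permutation
to a uniformly random permutation. -/
theorem dinv_mean_var (n : ℕ) (hn : 2 ≤ n) (π : Equiv.Perm (Fin n)) :
    ((∑ σ : Equiv.Perm (Fin n), (dinv π σ : ℚ)) / (Nat.factorial n : ℚ)
        > (n : ℚ) * ((n : ℚ) - 1) / 8)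
    ∧ ((∑ σ : Equiv.Perm (Fin n),
          ((dinv π σ : ℚ) -
            (∑ τ : Equiv.Perm (Fin n), (dinv π τ : ℚ)) / (Nat.factorial n : ℚ)) ^ 2)
        / (Nat.factorial n : ℚ)
        < ((n : ℚ) + 1) * ((n : ℚ) + 2) * (2 * (n : ℚ) + 3) / 6) := by
  constructor
  · have hlt := Finset.sum_lt_sum (fun i (_ : i ∈ (univ : Finset (Fin n))) => term_ge π i)
      ⟨(⟨1, by omega⟩ : Fin n), mem_univ _, term_gt π ⟨1, by omega⟩ (le_refl 1)⟩
    have hsum : ∑ i : Fin n, (i.val:ℚ)/4 = (n:ℚ)*((n:ℚ)-1)/8 := by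
      rw [Fin.sum_univ_eq_sum_range (fun t => (t:ℚ)/4) n, ← Finset.sum_div, gauss_q]
      ring
    rw [gt_iff_lt, mean_div π, ← hsum]
    exact hlt
  · calc (∑ σ : Equiv.Perm (Fin n),
          ((dinv π σ : ℚ) -
            (∑ τ : Equiv.Perm (Fin n), (dinv π τ : ℚ)) / (Nat.factorial n : ℚ)) ^ 2)
        / (Nat.factorial n : ℚ)
        = ∑ i : Fin n,
            (∑ y : Fin (i.val+1), (gq π i y - Sq π i / cq i)^2) / cq i := by
          rw [var_sum π ((∑ τ : Equiv.Perm (Fin n), (dinv π τ : ℚ))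
              / (Nat.factorial n : ℚ)) (mean_div π), Finset.sum_div]
          apply Finset.sum_congr rfl
          intro i _
          rw [← cq_mul_Pq i, mul_comm (cq i) (Pq i)]
          exact mul_div_mul_left _ (cq i) (ne_of_gt (Pq_pos i))
      _ ≤ ∑ i : Fin n, ((i.val:ℚ))^2 := Finset.sum_le_sum (fun i _ => Q_bound π i)
      _ = (n:ℚ)*((n:ℚ)-1)*(2*(n:ℚ)-1)/6 := by
          rw [Fin.sum_univ_eq_sum_range (fun t => ((t:ℚ))^2) n, sq_sum_q]
      _ < ((n : ℚ) + 1) * ((n : ℚ) + 2) * (2 * (n : ℚ) + 3) / 6 := by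
          nlinarith [show (0:ℚ) ≤ (n:ℚ) from Nat.cast_nonneg n]
end

section
/- Let K_n(k) be the number of permutations of Sₙ with exactly k inversions and T_n(D) = ∑_{k=0}^{D} K_n(k). Then for 0 ≤ D ≤ n, T_n(D) = K_{n+1}(D), and consequently the number of permutations at Kendall tau distance at most D from any fixed permutation equals T_n(D) ≤ C(n+D−1, D). -/
open Finset

theorem Equiv.Perm.inv_apply_self {α : Type*} (f : Equiv.Perm α) (x : α) : f⁻¹ (f x) = x :=
  f.symm_apply_apply x

theorem Equiv.Perm.apply_inv_self {α : Type*} (f : Equiv.Perm α) (x : α) : f (f⁻¹ x) = x :=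
  f.apply_symm_apply x

namespace KendallAux

variable {n : ℕ}

def ins (j : Fin (n + 1)) (e : Equiv.Perm (Fin n)) : Equiv.Perm (Fin (n + 1)) :=
  ((finSuccEquiv' j).trans e.optionCongr).trans finSuccEquivLast.symm

@[simp] lemma ins_apply_self (j : Fin (n + 1)) (e : Equiv.Perm (Fin n)) :
    ins j e j = Fin.last n := by simp [ins]

@[simp] lemma ins_apply_succAbove (j : Fin (n + 1)) (e : Equiv.Perm (Fin n)) (k : Fin n) :
    ins j e (j.succAbove k) = (e k).castSucc := by simp [ins]

@[simp] lemma ins_inv_last (j : Fin (n + 1)) (e : Equiv.Perm (Fin n)) :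
    (ins j e)⁻¹ (Fin.last n) = j := by
  rw [Equiv.Perm.inv_def, Equiv.symm_apply_eq]; simp

@[simp] lemma ins_inv_castSucc (j : Fin (n + 1)) (e : Equiv.Perm (Fin n)) (k : Fin n) :
    (ins j e)⁻¹ (Fin.castSucc k) = j.succAbove (e⁻¹ k) := by
  rw [Equiv.Perm.inv_def, Equiv.symm_apply_eq]; simp [Equiv.Perm.inv_def]

lemma card_gt (j : Fin (n + 1)) :
    (Finset.univ.filter (fun b : Fin (n + 1) => j < b)).card = n - j.val := by
  have : Finset.univ.filter (fun b : Fin (n + 1) => j < b) = Finset.Ioi j := by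
    ext b; simp
  rw [this, Fin.card_Ioi]; simp

lemma invVec_ins_last (j : Fin (n + 1)) (e : Equiv.Perm (Fin n)) :
    invVec (ins j e) (Fin.last n) = n - j.val := by
  set σ := ins j e with hσ
  rw [invVec, ← card_gt j]
  apply Finset.card_bij (fun x _ => σ⁻¹ x)
  · intro x hx
    simp only [Finset.mem_filter, Finset.mem_univ, true_and, hσ, ins_inv_last] at hx ⊢
    exact hx.2
  · intro x _ x' _ h
    exact (σ⁻¹).injective h
  · intro b hb
    simp only [Finset.mem_filter, Finset.mem_univ, true_and] at hb ⊢
    refine ⟨σ b, ⟨?_, ?_⟩, Equiv.Perm.inv_apply_self σ b⟩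
    · rw [Fin.lt_last_iff_ne_last]
      intro hcon
      have : b = j := by rw [← Equiv.Perm.inv_apply_self σ b, hcon, hσ, ins_inv_last]
      exact absurd hb (by rw [this]; exact lt_irrefl j)
    · rw [hσ, ins_inv_last, Equiv.Perm.inv_apply_self σ]
      exact hb

lemma invVec_ins_castSucc (j : Fin (n + 1)) (e : Equiv.Perm (Fin n)) (i : Fin n) :
    invVec (ins j e) (Fin.castSucc i) = invVec e i := by
  set σ := ins j e with hσ
  rw [invVec, invVec]
  symm
  apply Finset.card_bij (fun k _ => Fin.castSucc k)
  · intro k hk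
    simp only [Finset.mem_filter, Finset.mem_univ, true_and, hσ, ins_inv_castSucc,
      Fin.castSucc_lt_castSucc_iff, Fin.succAbove_lt_succAbove_iff] at hk ⊢
    exact hk
  · intro k _ k' _ h
    exact Fin.castSucc_injective n h
  · intro x hx
    simp only [Finset.mem_filter, Finset.mem_univ, true_and] at hx
    have hxl : x ≠ Fin.last n := by
      rw [← Fin.lt_last_iff_ne_last]
      exact hx.1.trans_le (Fin.le_last _)
    rcases Fin.eq_castSucc_or_eq_last x with ⟨m, rfl⟩ | hl
    · refine ⟨m, ?_, rfl⟩
      simp only [Finset.mem_filter, Finset.mem_univ, true_and]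
      simp only [hσ, ins_inv_castSucc, Fin.castSucc_lt_castSucc_iff,
        Fin.succAbove_lt_succAbove_iff] at hx
      exact hx
    · exact absurd hl hxl

lemma ins_inj {j j' : Fin (n + 1)} {e e' : Equiv.Perm (Fin n)}
    (h : ins j e = ins j' e') : j = j' ∧ e = e' := by
  have hj : j = j' := by
    have h1 : ins j' e' j = Fin.last n := by rw [← h]; simp
    have h2 : ins j' e' j' = Fin.last n := by simp
    exact (ins j' e').injective (h1.trans h2.symm)
  subst hj
  refine ⟨rfl, Equiv.ext fun k => ?_⟩
  have := congrArg (fun σ : Equiv.Perm (Fin (n + 1)) => σ (j.succAbove k)) h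
  simpa [Fin.castSucc_inj] using this

lemma ins_surj (σ : Equiv.Perm (Fin (n + 1))) : ∃ j e, ins j e = σ := by
  set j := σ⁻¹ (Fin.last n) with hj
  set g : Option (Fin n) ≃ Option (Fin n) :=
    (finSuccEquiv' j).symm.trans (σ.trans finSuccEquivLast) with hg
  refine ⟨j, Equiv.removeNone g, Equiv.ext fun x => ?_⟩
  rcases eq_or_ne x j with rfl | hx
  · have : σ j = Fin.last n := by rw [hj]; exact Equiv.Perm.apply_inv_self σ _
    simp [this]
  · obtain ⟨k, rfl⟩ := Fin.exists_succAbove_eq hx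
    have hne : σ (j.succAbove k) ≠ Fin.last n := by
      intro hcon
      have h2 : σ⁻¹ (Fin.last n) = j.succAbove k := by
        rw [← hcon, Equiv.Perm.inv_apply_self]
      exact Fin.succAbove_ne j k (h2.symm.trans hj.symm)
    obtain ⟨m, hm⟩ : ∃ m, σ (j.succAbove k) = Fin.castSucc m := by
      rcases Fin.eq_castSucc_or_eq_last (σ (j.succAbove k)) with ⟨m, hm⟩ | hl
      · exact ⟨m, hm⟩
      · exact absurd hl hne
    have hsome : g (some k) = some m := by simp [hg, hm]
    have h1 : some (Equiv.removeNone g k) = g (some k) :=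
      Equiv.removeNone_some g ⟨m, hsome⟩
    rw [hsome] at h1
    have hk : Equiv.removeNone g k = m := Option.some_injective _ h1
    rw [ins_apply_succAbove, hk, hm]

lemma inversions_ins (j : Fin (n + 1)) (e : Equiv.Perm (Fin n)) :
    inversions (ins j e) = inversions e + (n - j.val) := by
  classical
  set σ := ins j e with hσ
  set P : Fin (n + 1) × Fin (n + 1) → Prop := fun p => p.1 < p.2 ∧ σ p.2 < σ p.1 with hP
  have hsplit :
      ((Finset.univ.filter P).filter (fun p => p.1 = j)).card +
        ((Finset.univ.filter P).filter (fun p => ¬ p.1 = j)).card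
        = (Finset.univ.filter P).card :=
    Finset.card_filter_add_card_filter_not _
  have h1 : ((Finset.univ.filter P).filter (fun p => p.1 = j)).card = n - j.val := by
    rw [← card_gt j]
    apply Finset.card_bij (fun p _ => p.2)
    · rintro ⟨a, b⟩ hab
      simp only [Finset.mem_filter, Finset.mem_univ, true_and, hP] at hab ⊢
      obtain ⟨⟨hlt, _⟩, rfl⟩ := hab
      exact hlt
    · rintro ⟨a, b⟩ hab ⟨a', b'⟩ hab' h
      simp only [Finset.mem_filter, hP] at hab hab'
      obtain ⟨_, rfl⟩ := hab
      obtain ⟨_, rfl⟩ := hab'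
      simpa using h
    · intro b hb
      simp only [Finset.mem_filter, Finset.mem_univ, true_and] at hb
      refine ⟨(j, b), ?_, rfl⟩
      simp only [Finset.mem_filter, Finset.mem_univ, true_and, hP]
      refine ⟨⟨hb, ?_⟩, trivial⟩
      obtain ⟨k, rfl⟩ := Fin.exists_succAbove_eq (Fin.ne_of_gt hb)
      simp [hσ, Fin.castSucc_lt_last]
  have h2 : ((Finset.univ.filter P).filter (fun p => ¬ p.1 = j)).card = inversions e := by
    rw [inversions]
    symm
    apply Finset.card_bij (fun p _ => (j.succAbove p.1, j.succAbove p.2))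
    · rintro ⟨k, l⟩ hkl
      simp only [Finset.mem_filter, Finset.mem_univ, true_and, hP] at hkl ⊢
      obtain ⟨hlt, hval⟩ := hkl
      refine ⟨⟨Fin.succAbove_lt_succAbove_iff.mpr hlt, ?_⟩, Fin.succAbove_ne j k⟩
      simpa [hσ, Fin.castSucc_lt_castSucc_iff] using hval
    · rintro ⟨k, l⟩ _ ⟨k', l'⟩ _ h
      simp only [Prod.mk.injEq] at h
      exact Prod.ext (j.succAbove_right_injective h.1) (j.succAbove_right_injective h.2)
    · rintro ⟨a, b⟩ hab
      simp only [Finset.mem_filter, Finset.mem_univ, true_and, hP] at hab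
      obtain ⟨⟨hlt, hval⟩, ha⟩ := hab
      have hb : b ≠ j := by
        rintro rfl
        rw [hσ, ins_apply_self] at hval
        exact absurd hval (Fin.le_last _).not_gt
      obtain ⟨k, rfl⟩ := Fin.exists_succAbove_eq ha
      obtain ⟨l, rfl⟩ := Fin.exists_succAbove_eq hb
      refine ⟨(k, l), ?_, rfl⟩
      simp only [Finset.mem_filter, Finset.mem_univ, true_and]
      refine ⟨Fin.succAbove_lt_succAbove_iff.mp hlt, ?_⟩
      simpa [hσ, Fin.castSucc_lt_castSucc_iff] using hval
  have hfin : inversions σ = (Finset.univ.filter P).card := rfl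
  omega

lemma sum_invVec : ∀ {n : ℕ} (σ : Equiv.Perm (Fin n)), ∑ i, invVec σ i = inversions σ := by
  intro n
  induction n with
  | zero =>
    intro σ
    have h1 : inversions σ = 0 := by
      rw [inversions, Finset.card_eq_zero, Finset.filter_eq_empty_iff]
      rintro ⟨a, b⟩ _
      exact a.elim0
    simp [h1]
  | succ m ih =>
    intro σ
    obtain ⟨j, e, rfl⟩ := ins_surj σ
    rw [Fin.sum_univ_castSucc, inversions_ins, invVec_ins_last, ← ih e]
    congr 1
    exact Finset.sum_congr rfl fun i _ => invVec_ins_castSucc j e i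

lemma invVec_injective : ∀ {n : ℕ}, Function.Injective (fun σ : Equiv.Perm (Fin n) => invVec σ) := by
  intro n
  induction n with
  | zero => intro σ σ' _; exact Subsingleton.elim σ σ'
  | succ m ih =>
    intro σ σ' h
    obtain ⟨j, e, rfl⟩ := ins_surj σ
    obtain ⟨j', e', rfl⟩ := ins_surj σ'
    simp only at h
    have hl := congrFun h (Fin.last m)
    rw [invVec_ins_last, invVec_ins_last] at hl
    have hj : j = j' := by
      have hjm : j.val ≤ m := Nat.lt_succ_iff.mp j.isLt
      have hjm' : j'.val ≤ m := Nat.lt_succ_iff.mp j'.isLt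
      exact Fin.ext (by omega)
    subst hj
    have he : e = e' := by
      apply ih
      funext i
      have := congrFun h (Fin.castSucc i)
      rwa [invVec_ins_castSucc, invVec_ins_castSucc] at this
    rw [he]


-- PART 1
lemma Kn_succ (D : ℕ) (hD : D ≤ n) :
    Kn (n + 1) D = ∑ k ∈ Finset.range (D + 1), Kn n k := by
  classical
  have step1 : Kn (n + 1) D =
      (Finset.univ.filter (fun x : Fin (n + 1) × Equiv.Perm (Fin n) =>
        inversions x.2 + (n - x.1.val) = D)).card := by
    rw [Kn]
    symm
    apply Finset.card_bij (fun x _ => ins x.1 x.2)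
    · rintro ⟨j, e⟩ hx
      simp only [Finset.mem_filter, Finset.mem_univ, true_and] at hx ⊢
      rw [inversions_ins]; exact hx
    · rintro ⟨j, e⟩ _ ⟨j', e'⟩ _ h
      obtain ⟨h1, h2⟩ := ins_inj h
      exact Prod.ext h1 h2
    · intro σ hσ
      simp only [Finset.mem_filter, Finset.mem_univ, true_and] at hσ
      obtain ⟨j, e, rfl⟩ := ins_surj σ
      rw [inversions_ins] at hσ
      exact ⟨(j, e), by simp only [Finset.mem_filter, Finset.mem_univ, true_and]; exact hσ, rfl⟩
  have step2 : Kn (n + 1) D =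
      ∑ j : Fin (n + 1), (Finset.univ.filter
        (fun e : Equiv.Perm (Fin n) => inversions e + (n - j.val) = D)).card := by
    rw [step1, Finset.card_filter, ← Finset.univ_product_univ, Finset.sum_product]
    exact Finset.sum_congr rfl fun j _ => (Finset.card_filter _ _).symm
  rw [step2]
  set g : ℕ → ℕ := fun m => (Finset.univ.filter
    (fun e : Equiv.Perm (Fin n) => inversions e + (n - m) = D)).card with hg
  have step3 : ∑ j : Fin (n + 1), g j.val = ∑ j ∈ Finset.range (n + 1), g j :=
    Fin.sum_univ_eq_sum_range g (n + 1)
  rw [show (∑ j : Fin (n + 1), (Finset.univ.filter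
      (fun e : Equiv.Perm (Fin n) => inversions e + (n - j.val) = D)).card)
      = ∑ j : Fin (n + 1), g j.val from rfl, step3]
  rw [Finset.range_eq_Ico, ← Finset.sum_Ico_consecutive _ (Nat.zero_le (n - D))
    (by omega : n - D ≤ n + 1)]
  have hzero : ∑ j ∈ Finset.Ico 0 (n - D), g j = 0 := by
    apply Finset.sum_eq_zero
    intro j hj
    rw [Finset.mem_Ico] at hj
    rw [hg]
    simp only [Finset.card_eq_zero, Finset.filter_eq_empty_iff]
    intro e _
    omega
  rw [hzero, zero_add, Finset.sum_Ico_eq_sum_range]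
  rw [show n + 1 - (n - D) = D + 1 by omega]
  apply Finset.sum_congr rfl
  intro k hk
  rw [Finset.mem_range, Nat.lt_succ_iff] at hk
  show (Finset.univ.filter
      (fun e : Equiv.Perm (Fin n) => inversions e + (n - (n - D + k)) = D)).card = Kn n k
  rw [Kn]
  congr 1
  apply Finset.filter_congr
  intro e _
  constructor <;> intro h <;> omega

-- PART 2
lemma dtau_eq (π σ : Equiv.Perm (Fin n)) : dtau π σ = inversions (σ * π⁻¹) := by
  classical
  rw [dtau, inversions]
  apply Finset.card_bij (fun p _ => if π p.1 < π p.2 then (π p.1, π p.2) else (π p.2, π p.1))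
  · rintro ⟨a, b⟩ hab
    simp only [Finset.mem_filter, Finset.mem_univ, true_and] at hab ⊢
    obtain ⟨hlt, hdis⟩ := hab
    have hne : a ≠ b := ne_of_lt hlt
    by_cases h : π a < π b
    · rw [if_pos h]
      have h2 : ¬ σ a < σ b := fun hc => hdis ⟨fun _ => hc, fun _ => h⟩
      have h3 : σ b < σ a := lt_of_le_of_ne (not_lt.mp h2) (σ.injective.ne hne.symm)
      refine ⟨h, ?_⟩
      simpa [Equiv.Perm.mul_apply] using h3
    · rw [if_neg h]
      have hba : π b < π a := lt_of_le_of_ne (not_lt.mp h) (π.injective.ne hne.symm)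
      have h2 : σ a < σ b := by
        by_contra hc
        exact hdis (iff_of_false h hc)
      refine ⟨hba, ?_⟩
      simpa [Equiv.Perm.mul_apply] using h2
  · rintro ⟨a, b⟩ hab ⟨c, d⟩ hcd h
    simp only [Finset.mem_filter, Finset.mem_univ, true_and] at hab hcd
    have hab1 := hab.1
    have hcd1 := hcd.1
    split_ifs at h with h1 h2 h2 <;>
      simp only [Prod.mk.injEq] at h <;>
      [skip; skip; skip; skip]
    · exact Prod.ext (π.injective h.1) (π.injective h.2)
    · have e1 : a = d := π.injective h.1
      have e2 : b = c := π.injective h.2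
      subst e1; subst e2
      exact absurd (hab1.trans hcd1) (lt_irrefl _)
    · have e1 : b = c := π.injective h.1
      have e2 : a = d := π.injective h.2
      subst e1; subst e2
      exact absurd (hcd1.trans hab1) (lt_irrefl _)
    · exact Prod.ext (π.injective h.2) (π.injective h.1)
  · rintro ⟨a, b⟩ hab
    simp only [Finset.mem_filter, Finset.mem_univ, true_and] at hab
    obtain ⟨hlt, hval⟩ := hab
    have hval' : σ (π⁻¹ b) < σ (π⁻¹ a) := by
      simpa [Equiv.Perm.mul_apply] using hval
    have hne : a ≠ b := ne_of_lt hlt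
    by_cases h : π⁻¹ a < π⁻¹ b
    · refine ⟨(π⁻¹ a, π⁻¹ b), ?_, ?_⟩
      · simp only [Finset.mem_filter, Finset.mem_univ, true_and]
        refine ⟨h, ?_⟩
        rw [Equiv.Perm.apply_inv_self, Equiv.Perm.apply_inv_self]
        intro hiff
        exact absurd (hiff.mp hlt) (not_lt.mpr hval'.le)
      · have : π (π⁻¹ a) < π (π⁻¹ b) := by
          rw [Equiv.Perm.apply_inv_self, Equiv.Perm.apply_inv_self]; exact hlt
        rw [if_pos this, Equiv.Perm.apply_inv_self, Equiv.Perm.apply_inv_self]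
    · have hne' : (π⁻¹ : Equiv.Perm (Fin n)) b ≠ π⁻¹ a := fun hc =>
        hne.symm (π⁻¹.injective hc)
      have h' : π⁻¹ b < π⁻¹ a := lt_of_le_of_ne (not_lt.mp h) hne'
      refine ⟨(π⁻¹ b, π⁻¹ a), ?_, ?_⟩
      · simp only [Finset.mem_filter, Finset.mem_univ, true_and]
        refine ⟨h', ?_⟩
        rw [Equiv.Perm.apply_inv_self, Equiv.Perm.apply_inv_self]
        intro hiff
        exact absurd (hiff.mpr hval') (not_lt.mpr hlt.le)
      · have : ¬ π (π⁻¹ b) < π (π⁻¹ a) := by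
          rw [Equiv.Perm.apply_inv_self, Equiv.Perm.apply_inv_self]
          exact not_lt.mpr hlt.le
        rw [if_neg this, Equiv.Perm.apply_inv_self, Equiv.Perm.apply_inv_self]
  
lemma card_ball (π : Equiv.Perm (Fin n)) (D : ℕ) :
    (Finset.univ.filter (fun σ : Equiv.Perm (Fin n) => dtau π σ ≤ D)).card
      = (Finset.univ.filter (fun τ : Equiv.Perm (Fin n) => inversions τ ≤ D)).card := by
  apply Finset.card_bij (fun σ _ => σ * π⁻¹)
  · intro σ hσ
    simp only [Finset.mem_filter, Finset.mem_univ, true_and] at hσ ⊢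
    rwa [← dtau_eq]
  · intro a _ b _ h
    exact mul_right_cancel h
  · intro τ hτ
    simp only [Finset.mem_filter, Finset.mem_univ, true_and] at hτ
    refine ⟨τ * π, ?_, by rw [mul_inv_cancel_right]⟩
    simp only [Finset.mem_filter, Finset.mem_univ, true_and]
    rwa [dtau_eq, mul_inv_cancel_right]

lemma sum_Kn_eq (D : ℕ) :
    ∑ k ∈ Finset.range (D + 1), Kn n k
      = (Finset.univ.filter (fun τ : Equiv.Perm (Fin n) => inversions τ ≤ D)).card := by
  classical
  simp only [Kn, Finset.card_filter]
  rw [Finset.sum_comm]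
  refine Finset.sum_congr rfl fun σ _ => ?_
  rw [Finset.sum_ite_eq (Finset.range (D + 1)) (inversions σ) (fun _ => 1)]
  simp [Nat.lt_succ_iff]


lemma invVec_zero {m : ℕ} (σ : Equiv.Perm (Fin (m + 1))) : invVec σ 0 = 0 := by
  rw [invVec, Finset.card_eq_zero, Finset.filter_eq_empty_iff]
  intro j _
  simp [Fin.not_lt_zero]

lemma card_multiset_sum {α β : Type*} [DecidableEq α] (s : Finset β) (f : β → Multiset α) :
    Multiset.card (∑ i ∈ s, f i) = ∑ i ∈ s, Multiset.card (f i) := by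
  classical
  induction s using Finset.induction with
  | empty => simp
  | insert a s h ih => simp [Finset.sum_insert h, ih]

/-- The padded inversion-table multiset. -/
def toSym (m D : ℕ) (σ : Equiv.Perm (Fin (m + 1))) : Sym (Fin (m + 1)) D :=
  if h : inversions σ ≤ D then
    ⟨(∑ i : Fin (m + 1), Multiset.replicate (invVec σ i) i)
        + Multiset.replicate (D - inversions σ) 0, by
      rw [Multiset.card_add, card_multiset_sum]
      simp only [Multiset.card_replicate]
      rw [sum_invVec]
      omega⟩
  else ⟨Multiset.replicate D 0, by simp⟩

lemma count_toSym (m D : ℕ) (σ : Equiv.Perm (Fin (m + 1))) (h : inversions σ ≤ D)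
    (a : Fin (m + 1)) :
    Multiset.count a ((toSym m D σ) : Multiset (Fin (m + 1)))
      = invVec σ a + (if a = 0 then D - inversions σ else 0) := by
  rw [toSym]
  erw [dif_pos h]
  show Multiset.count a ((∑ i : Fin (m + 1), Multiset.replicate (invVec σ i) i)
      + Multiset.replicate (D - inversions σ) 0) = _
  rw [Multiset.count_add, Multiset.count_sum', Multiset.count_replicate]
  rw [show (if (0 : Fin (m + 1)) = a then D - inversions σ else 0)
      = (if a = 0 then D - inversions σ else 0) by simp [eq_comm]]
  congr 1
  simp only [Multiset.count_replicate]
  rw [Finset.sum_ite_eq' Finset.univ a (fun i => invVec σ i)]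
  simp

lemma bound {D : ℕ} (hD : D ≤ n) :
    (Finset.univ.filter (fun τ : Equiv.Perm (Fin n) => inversions τ ≤ D)).card
      ≤ (n + D - 1).choose D := by
  classical
  cases n with
  | zero =>
    have hD0 : D = 0 := Nat.le_zero.mp hD
    subst hD0
    have h1 : (Finset.univ.filter (fun τ : Equiv.Perm (Fin 0) => inversions τ ≤ 0)).card ≤ 1 := by
      refine le_trans (Finset.card_filter_le _ _) ?_
      rw [Finset.card_univ]
      simp
    simpa [Nat.choose_zero_right] using h1
  | succ m =>
    have hmem : ∀ σ ∈ Finset.univ.filter (fun τ : Equiv.Perm (Fin (m + 1)) => inversions τ ≤ D),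
        toSym m D σ ∈ (Finset.univ : Finset (Sym (Fin (m + 1)) D)) :=
      fun _ _ => Finset.mem_univ _
    have hinj : Set.InjOn (toSym m D)
        ↑(Finset.univ.filter (fun τ : Equiv.Perm (Fin (m + 1)) => inversions τ ≤ D)) := by
      intro σ hσ σ' hσ' h
      rw [Finset.mem_coe, Finset.mem_filter] at hσ hσ'
      apply invVec_injective
      funext a
      have hc : Multiset.count a ((toSym m D σ) : Multiset (Fin (m + 1)))
          = Multiset.count a ((toSym m D σ') : Multiset (Fin (m + 1))) := by rw [h]
      rw [count_toSym m D σ hσ.2 a, count_toSym m D σ' hσ'.2 a] at hc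
      by_cases ha : a = 0
      · subst ha
        simp only [invVec_zero]
      · simpa [ha] using hc
    calc (Finset.univ.filter (fun τ : Equiv.Perm (Fin (m + 1)) => inversions τ ≤ D)).card
        ≤ (Finset.univ : Finset (Sym (Fin (m + 1)) D)).card :=
          Finset.card_le_card_of_injOn (toSym m D) hmem hinj
      _ = (m + 1 + D - 1).choose D := by
          rw [Finset.card_univ, Sym.card_sym_eq_choose, Fintype.card_fin]


end KendallAux

/-- T_n(D) = K_{n+1}(D) for D ≤ n, and the Kendall tau ball of radius D around any
permutation has size T_n(D) ≤ C(n+D−1, D). -/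
theorem kendall_ball_size (n D : ℕ) (hD : D ≤ n) :
    (∑ k ∈ Finset.range (D + 1), Kn n k) = Kn (n + 1) D ∧
    (∀ π : Equiv.Perm (Fin n),
      (Finset.univ.filter (fun σ : Equiv.Perm (Fin n) => dtau π σ ≤ D)).card
        = ∑ k ∈ Finset.range (D + 1), Kn n k) ∧
    (∑ k ∈ Finset.range (D + 1), Kn n k) ≤ Nat.choose (n + D - 1) D := by
  refine ⟨(KendallAux.Kn_succ D hD).symm, fun π => ?_, ?_⟩
  · rw [KendallAux.card_ball π D, KendallAux.sum_Kn_eq D]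
  · rw [KendallAux.sum_Kn_eq D]
    exact KendallAux.bound hD
end

section
/- For any x in the product set X = [0:1]×[0:2]×⋯×[0:n−1] and any integer 0 ≤ D ≤ n(n−1)/2, the number of points y ∈ X with ℓ₁ distance at most D from x is at most 2^{min(n,D)} · C(n+D, D). -/
open Finset

lemma count_M (m D : ℕ) (d : Fin m → Fin (D + 1)) (i : Fin m) :
    Multiset.count i.succ ((∑ j : Fin m, Multiset.replicate ((d j : ℕ)) j.succ) +
      Multiset.replicate (D - ∑ j, (d j : ℕ)) (0 : Fin (m + 1))) = d i := by
  rw [Multiset.count_add, Multiset.count_sum']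
  simp [Multiset.count_replicate, Fin.succ_inj, (Fin.succ_ne_zero i).symm]

lemma mcard_sum {α β : Type*} (s : Finset α) (f : α → Multiset β) :
    Multiset.card (∑ i ∈ s, f i) = ∑ i ∈ s, Multiset.card (f i) := by
  induction s using Finset.cons_induction with
  | empty => simp
  | cons a s ha ih => simp [Finset.sum_cons, ih]

lemma card_M (m D : ℕ) (d : Fin m → Fin (D + 1)) (h : (∑ j, (d j : ℕ)) ≤ D) :
    Multiset.card ((∑ j : Fin m, Multiset.replicate ((d j : ℕ)) j.succ) +
      Multiset.replicate (D - ∑ j, (d j : ℕ)) (0 : Fin (m + 1))) = D := by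
  rw [Multiset.card_add, mcard_sum]
  simp only [Multiset.card_replicate]
  omega

/-- Stars and bars bound: number of tuples `d : Fin m → Fin (D+1)` with sum ≤ D. -/
lemma tuple_sum_le_card (m D : ℕ) :
    ((Finset.univ : Finset (Fin m → Fin (D + 1))).filter
        (fun d => (∑ i, (d i : ℕ)) ≤ D)).card ≤ (m + D).choose D := by
  classical
  have key : ((Finset.univ : Finset (Fin m → Fin (D + 1))).filter
        (fun d => (∑ i, (d i : ℕ)) ≤ D)).card ≤ Fintype.card (Sym (Fin (m + 1)) D) := by
    rw [← Finset.card_attach, ← Finset.card_univ]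
    refine Finset.card_le_card_of_injOn
      (fun d => (⟨(∑ j : Fin m, Multiset.replicate ((d.1 j : ℕ)) j.succ) +
          Multiset.replicate (D - ∑ j, (d.1 j : ℕ)) (0 : Fin (m + 1)),
          card_M m D d.1 (Finset.mem_filter.mp d.2).2⟩ : Sym (Fin (m + 1)) D))
      (fun _ _ => Finset.mem_univ _) ?_
    intro d _ d' _ h
    have hm := congrArg Subtype.val h
    dsimp only at hm
    ext i
    have c := congrArg (Multiset.count i.succ) hm
    rw [count_M m D d.1 i, count_M m D d'.1 i] at c
    exact c
  have hcard : Fintype.card (Sym (Fin (m + 1)) D) = (m + D).choose D := by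
    clear key
    rw [Sym.card_sym_eq_choose, Fintype.card_fin]
    have : m + 1 + D - 1 = m + D := by omega
    rw [this]
  exact key.trans (le_of_eq hcard)

/-- In the product set X = [0:1]×[0:2]×⋯×[0:n−1] (coordinate i of `Fin (n-1)` ranges
over {0,…,i+1}), the ℓ₁-ball of radius D ≤ n(n−1)/2 around any point has at most
2^{min(n,D)} · C(n+D, D) points. -/
theorem invVec_ball_bound (n D : ℕ) (hD : D ≤ n * (n - 1) / 2)
    (x : ∀ i : Fin (n - 1), Fin ((i : ℕ) + 2)) :
    ((Finset.univ : Finset (∀ i : Fin (n - 1), Fin ((i : ℕ) + 2))).filter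
        (fun y => (∑ i : Fin (n - 1), (((x i : ℕ) : ℤ) - ((y i : ℕ) : ℤ)).natAbs) ≤ D)).card
      ≤ 2 ^ (min n D) * Nat.choose (n + D) D := by
  classical
  set T : Finset (Fin (n - 1) → Fin (D + 1)) :=
    Finset.univ.filter (fun d => (∑ i, (d i : ℕ)) ≤ D) with hT
  set A : Finset ((Fin (n - 1) → Bool) × (Fin (n - 1) → Fin (D + 1))) :=
    Finset.univ.filter (fun p =>
      (∑ i, (p.2 i : ℕ)) ≤ D ∧ ∀ i, (p.2 i : ℕ) = 0 → p.1 i = false) with hA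
  -- Step 1: inject the ball into A
  have step1 : ((Finset.univ : Finset (∀ i : Fin (n - 1), Fin ((i : ℕ) + 2))).filter
        (fun y => (∑ i : Fin (n - 1), (((x i : ℕ) : ℤ) - ((y i : ℕ) : ℤ)).natAbs) ≤ D)).card
      ≤ A.card := by
    refine Finset.card_le_card_of_injOn
      (fun y => (fun i => decide ((x i : ℕ) < (y i : ℕ)),
        fun i => (⟨min ((((x i : ℕ) : ℤ) - ((y i : ℕ) : ℤ)).natAbs) D, by omega⟩ : Fin (D + 1))))
      ?_ ?_
    · intro y hy
      rw [Finset.mem_coe, Finset.mem_filter] at hy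
      have hy' := hy.2
      have hterm : ∀ i : Fin (n - 1), (((x i : ℕ) : ℤ) - ((y i : ℕ) : ℤ)).natAbs ≤ D := by
        intro i
        exact le_trans (Finset.single_le_sum
          (f := fun i : Fin (n - 1) => (((x i : ℕ) : ℤ) - ((y i : ℕ) : ℤ)).natAbs)
          (fun _ _ => Nat.zero_le _) (Finset.mem_univ i)) hy'
      rw [Finset.mem_coe, hA, Finset.mem_filter]
      refine ⟨Finset.mem_univ _, ?_, ?_⟩
      · calc (∑ i, ((min ((((x i : ℕ) : ℤ) - ((y i : ℕ) : ℤ)).natAbs) D : ℕ)))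
            = ∑ i, (((x i : ℕ) : ℤ) - ((y i : ℕ) : ℤ)).natAbs := by
              refine Finset.sum_congr rfl (fun i _ => ?_)
              exact min_eq_left (hterm i)
          _ ≤ D := hy'
      · intro i hi
        simp only [min_eq_left (hterm i)] at hi
        have : (x i : ℕ) = (y i : ℕ) := by omega
        simp [this]
    · intro y hy y' hy' h
      simp only [Finset.coe_filter, Set.mem_setOf_eq, Finset.mem_univ, true_and] at hy hy'
      have hterm : ∀ i : Fin (n - 1), (((x i : ℕ) : ℤ) - ((y i : ℕ) : ℤ)).natAbs ≤ D := by
        intro i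
        exact le_trans (Finset.single_le_sum
          (f := fun i : Fin (n - 1) => (((x i : ℕ) : ℤ) - ((y i : ℕ) : ℤ)).natAbs)
          (fun _ _ => Nat.zero_le _) (Finset.mem_univ i)) hy
      have hterm' : ∀ i : Fin (n - 1), (((x i : ℕ) : ℤ) - ((y' i : ℕ) : ℤ)).natAbs ≤ D := by
        intro i
        exact le_trans (Finset.single_le_sum
          (f := fun i : Fin (n - 1) => (((x i : ℕ) : ℤ) - ((y' i : ℕ) : ℤ)).natAbs)
          (fun _ _ => Nat.zero_le _) (Finset.mem_univ i)) hy'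
      have h1 := congrArg Prod.fst h
      have h2 := congrArg Prod.snd h
      funext i
      have e1 : decide ((x i : ℕ) < (y i : ℕ)) = decide ((x i : ℕ) < (y' i : ℕ)) :=
        congrFun h1 i
      have e2 : min ((((x i : ℕ) : ℤ) - ((y i : ℕ) : ℤ)).natAbs) D
          = min ((((x i : ℕ) : ℤ) - ((y' i : ℕ) : ℤ)).natAbs) D := by
        have := congrFun h2 i
        exact congrArg Fin.val this
      rw [min_eq_left (hterm i), min_eq_left (hterm' i)] at e2
      have e1' : ((x i : ℕ) < (y i : ℕ)) ↔ ((x i : ℕ) < (y' i : ℕ)) :=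
        decide_eq_decide.mp e1
      exact Fin.ext (by omega)
  -- Step 2: count A fiberwise over the second coordinate
  have fiber_le : ∀ d : Fin (n - 1) → Fin (D + 1),
      (A.filter (fun p => p.2 = d)).card
        ≤ if (∑ i, (d i : ℕ)) ≤ D then 2 ^ (min n D) else 0 := by
    intro d
    by_cases hd : (∑ i, (d i : ℕ)) ≤ D
    · rw [if_pos hd]
      have hsub : (A.filter (fun p => p.2 = d)).card
          ≤ (Fintype.piFinset (fun i : Fin (n - 1) =>
              if (d i : ℕ) = 0 then ({false} : Finset Bool) else Finset.univ)).card := by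
        refine Finset.card_le_card_of_injOn (fun p => p.1) ?_ ?_
        · intro p hp
          rw [Finset.mem_coe, Finset.mem_filter, hA, Finset.mem_filter] at hp
          rw [Finset.mem_coe, Fintype.mem_piFinset]
          intro i
          by_cases h0 : (d i : ℕ) = 0
          · rw [if_pos h0]
            have := hp.1.2.2 i (by rw [hp.2]; exact h0)
            simp [this]
          · rw [if_neg h0]; exact Finset.mem_univ _
        · intro p hp p' hp' h
          simp only [Finset.coe_filter, Set.mem_setOf_eq] at hp hp'
          exact Prod.ext h (hp.2.trans hp'.2.symm)
      have hpi : (Fintype.piFinset (fun i : Fin (n - 1) =>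
            if (d i : ℕ) = 0 then ({false} : Finset Bool) else Finset.univ)).card
          ≤ 2 ^ (min n D) := by
        rw [Fintype.card_piFinset]
        have : ∏ i : Fin (n - 1), (if (d i : ℕ) = 0 then ({false} : Finset Bool)
              else Finset.univ).card
            = ∏ i : Fin (n - 1), (if (d i : ℕ) = 0 then 1 else 2) := by
          refine Finset.prod_congr rfl (fun i _ => ?_)
          by_cases h0 : (d i : ℕ) = 0 <;> simp [h0]
        rw [this, Finset.prod_ite, Finset.prod_const_one, Finset.prod_const, one_mul]
        set k := (Finset.univ.filter (fun i : Fin (n - 1) => ¬ (d i : ℕ) = 0)).card with hk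
        have hk1 : k ≤ n := by
          calc k ≤ Fintype.card (Fin (n - 1)) := Finset.card_filter_le _ _
            _ = n - 1 := Fintype.card_fin _
            _ ≤ n := Nat.sub_le _ _
        have hk2 : k ≤ D := by
          have h1 : k ≤ ∑ i ∈ Finset.univ.filter (fun i : Fin (n - 1) => ¬ (d i : ℕ) = 0),
              (d i : ℕ) := by
            rw [hk, Finset.card_eq_sum_ones]
            refine Finset.sum_le_sum ?_
            intro i hi
            rw [Finset.mem_filter] at hi
            exact Nat.one_le_iff_ne_zero.mpr hi.2
          have h2 : ∑ i ∈ Finset.univ.filter (fun i : Fin (n - 1) => ¬ (d i : ℕ) = 0),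
              (d i : ℕ) ≤ ∑ i, (d i : ℕ) :=
            Finset.sum_le_sum_of_subset (Finset.filter_subset _ _)
          exact le_trans h1 (le_trans h2 hd)
        exact Nat.pow_le_pow_right (by norm_num) (le_min hk1 hk2)
      exact le_trans hsub hpi
    · rw [if_neg hd]
      rw [Nat.le_zero, Finset.card_eq_zero, Finset.filter_eq_empty_iff]
      intro p hp
      rw [hA, Finset.mem_filter] at hp
      intro hpd
      exact hd (by rw [← hpd]; exact hp.2.1)
  have step2 : A.card ≤ 2 ^ (min n D) * T.card := by
    rw [Finset.card_eq_sum_card_fiberwise (f := Prod.snd)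
      (t := (Finset.univ : Finset (Fin (n - 1) → Fin (D + 1)))) (fun p _ => Finset.mem_univ _)]
    calc ∑ d : Fin (n - 1) → Fin (D + 1), (A.filter (fun p => p.2 = d)).card
        ≤ ∑ d : Fin (n - 1) → Fin (D + 1),
            (if (∑ i, (d i : ℕ)) ≤ D then 2 ^ (min n D) else 0) :=
          Finset.sum_le_sum (fun d _ => fiber_le d)
      _ = ∑ d ∈ T, 2 ^ (min n D) := (Finset.sum_filter _ _).symm
      _ = T.card * 2 ^ (min n D) := by rw [Finset.sum_const, smul_eq_mul]
      _ = 2 ^ (min n D) * T.card := Nat.mul_comm _ _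
  -- Step 3: stars and bars
  have step3 : T.card ≤ (n + D).choose D := by
    refine le_trans (tuple_sum_le_card (n - 1) D) (Nat.choose_le_choose D ?_)
    exact Nat.add_le_add_right (Nat.sub_le _ _) D
  calc ((Finset.univ : Finset (∀ i : Fin (n - 1), Fin ((i : ℕ) + 2))).filter
        (fun y => (∑ i : Fin (n - 1), (((x i : ℕ) : ℤ) - ((y i : ℕ) : ℤ)).natAbs) ≤ D)).card
      ≤ A.card := step1
    _ ≤ 2 ^ (min n D) * T.card := step2
    _ ≤ 2 ^ (min n D) * (n + D).choose D := Nat.mul_le_mul_left _ step3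
end

section
/- Let G be a geometric random variable on {0,1,2,...} with P(G = j) = (1−q)q^j (0 < q < 1), and let G_k be G truncated at k, i.e., P(G_k = j) = q^j(1−q)/(1−q^{k+1}) for 0 ≤ j ≤ k. Then the Shannon entropy of G_k equals H_b(q)/(1−q) − H_b(Q_k)/Q_k, where Q_k = 1 − q^{k+1} and H_b is the binary entropy function. -/
open Finset

/-- Binary entropy (natural log). -/
noncomputable def Hb (p : ℝ) : ℝ := -(p * Real.log p) - (1 - p) * Real.log (1 - p)

lemma sum_geom' (q : ℝ) (n : ℕ) :
    (1 - q) * ∑ j ∈ Finset.range n, q ^ j = 1 - q ^ n := by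
  induction n with
  | zero => simp
  | succ n ih =>
    rw [Finset.sum_range_succ, mul_add, ih, pow_succ]
    ring

lemma sum_j_geom (q : ℝ) (n : ℕ) :
    (1 - q) ^ 2 * ∑ j ∈ Finset.range n, (j : ℝ) * q ^ j
      = q * (1 - q ^ n) - (n : ℝ) * q ^ n * (1 - q) := by
  induction n with
  | zero => simp
  | succ n ih =>
    rw [Finset.sum_range_succ, mul_add, ih, pow_succ]
    push_cast
    ring

/-- Entropy of a geometric random variable truncated at k. -/
theorem truncated_geometric_entropy (q : ℝ) (hq0 : 0 < q) (hq1 : q < 1) (k : ℕ) :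
    -∑ j ∈ Finset.range (k + 1),
        (q ^ j * (1 - q) / (1 - q ^ (k + 1))) *
          Real.log (q ^ j * (1 - q) / (1 - q ^ (k + 1)))
      = Hb q / (1 - q) - Hb (1 - q ^ (k + 1)) / (1 - q ^ (k + 1)) := by
  have hq1' : 0 < 1 - q := by linarith
  have hQ : 0 < 1 - q ^ (k + 1) := by
    have := pow_lt_one₀ hq0.le hq1 (by omega : k + 1 ≠ 0)
    linarith
  set a := Real.log q with ha
  set b := Real.log (1 - q) with hb
  set c := Real.log (1 - q ^ (k + 1)) with hc
  have hlog : ∀ j : ℕ,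
      Real.log (q ^ j * (1 - q) / (1 - q ^ (k + 1))) = (j : ℝ) * a + b - c := by
    intro j
    rw [Real.log_div (by positivity) (by positivity),
      Real.log_mul (by positivity) (by positivity), Real.log_pow]
  have hsum :
      ∑ j ∈ Finset.range (k + 1),
        (q ^ j * (1 - q) / (1 - q ^ (k + 1))) *
          Real.log (q ^ j * (1 - q) / (1 - q ^ (k + 1)))
      = ((1 - q) / (1 - q ^ (k + 1))) *
          (a * (∑ j ∈ Finset.range (k + 1), (j : ℝ) * q ^ j)
            + (b - c) * (∑ j ∈ Finset.range (k + 1), q ^ j)) := by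
    simp only [hlog]
    rw [mul_add]
    simp only [Finset.mul_sum]
    rw [← Finset.sum_add_distrib]
    exact Finset.sum_congr rfl fun j _ => by ring
  have hS1 : ∑ j ∈ Finset.range (k + 1), q ^ j = (1 - q ^ (k + 1)) / (1 - q) := by
    rw [eq_div_iff (by linarith), mul_comm, sum_geom']
  have hS2 : ∑ j ∈ Finset.range (k + 1), (j : ℝ) * q ^ j
      = (q * (1 - q ^ (k + 1)) - ((k : ℝ) + 1) * q ^ (k + 1) * (1 - q)) / (1 - q) ^ 2 := by
    rw [eq_div_iff (by positivity), mul_comm, sum_j_geom]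
    push_cast
    ring
  have hlogQ : Real.log (1 - (1 - q ^ (k + 1))) = ((k : ℝ) + 1) * a := by
    have : 1 - (1 - q ^ (k + 1)) = q ^ (k + 1) := by ring
    rw [this, Real.log_pow]
    push_cast
    ring
  rw [hsum, hS1, hS2, Hb, Hb, hlogQ, ← ha, ← hb, ← hc]
  field_simp
  ring
end
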